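/- Define the asymptotic Lagrangian density L[M, U, V, W] = (−2 M_{θv} − 4 U_{θv} + 3 U_θ U_v + V_θ V_v cosh² W + W_θ W_v) e^{-U} for smooth functions M, U, V, W : ℝ² → ℝ of (θ, v). Suppose M, U, V, W satisfy the non-polarized colliding plane wave evolution equations U_{θv} = U_θ U_v, V_{θv} = ½(U_θ V_v + U_v V_θ) − (V_θ W_v + V_v W_θ) tanh W, W_{θv} = ½(U_θ W_v + U_v W_θ) + V_θ V_v sinh W cosh W, and M_{θv} = ½(−U_θ U_v + V_θ V_v cosh² W + W_θ W_v). Then for all smooth compactly supported functions φ_M, φ_U, φ_V, φ_W : ℝ² → ℝ, the function s ↦ ∫_{ℝ²} L[M + s φ_M, U + s φ_U, V + s φ_V, W + s φ_W] dθ dv has derivative zero at s = 0; i.e., solutions of the asymptotic evolution equations are critical points of the asymptotic action. -/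

import Mathlib

open Real MeasureTheory

/-- Partial derivative with respect to the first variable `θ`. -/
noncomputable def pd1 (F : ℝ → ℝ → ℝ) : ℝ → ℝ → ℝ := fun θ v => deriv (fun t => F t v) θ

/-- Partial derivative with respect to the second variable `v`. -/
noncomputable def pd2 (F : ℝ → ℝ → ℝ) : ℝ → ℝ → ℝ := fun θ v => deriv (fun s => F θ s) v

/-- The asymptotic Lagrangian density
`L[M,U,V,W] = (−2M_{θv} − 4U_{θv} + 3U_θ U_v + V_θ V_v cosh² W + W_θ W_v) e^{-U}`. -/
noncomputable def Ldens (M U V W : ℝ → ℝ → ℝ) (θ v : ℝ) : ℝ :=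
  (-2 * pd2 (pd1 M) θ v - 4 * pd2 (pd1 U) θ v + 3 * pd1 U θ v * pd2 U θ v
    + pd1 V θ v * pd2 V θ v * (Real.cosh (W θ v))^2 + pd1 W θ v * pd2 W θ v)
  * Real.exp (-(U θ v))

section helpers

variable {F G : ℝ → ℝ → ℝ}

lemma pd1_eq_fderiv (hF : ContDiff ℝ (⊤:ℕ∞) (fun p : ℝ × ℝ => F p.1 p.2)) (θ v : ℝ) :
    pd1 F θ v = fderiv ℝ (fun p : ℝ × ℝ => F p.1 p.2) (θ, v) (1, 0) := by
  have h1 : HasDerivAt (fun t : ℝ => ((t, v) : ℝ × ℝ)) (1, 0) θ :=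
    (hasDerivAt_id θ).prodMk (hasDerivAt_const θ v)
  exact (((hF.differentiable (by simp) (θ, v)).hasFDerivAt).comp_hasDerivAt θ
    h1).deriv

lemma pd2_eq_fderiv (hF : ContDiff ℝ (⊤:ℕ∞) (fun p : ℝ × ℝ => F p.1 p.2)) (θ v : ℝ) :
    pd2 F θ v = fderiv ℝ (fun p : ℝ × ℝ => F p.1 p.2) (θ, v) (0, 1) := by
  have h1 : HasDerivAt (fun s : ℝ => ((θ, s) : ℝ × ℝ)) (0, 1) v :=
    (hasDerivAt_const v θ).prodMk (hasDerivAt_id v)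
  exact (((hF.differentiable (by simp) (θ, v)).hasFDerivAt).comp_hasDerivAt v
    h1).deriv

lemma hasDerivAt_pd1 (hF : ContDiff ℝ (⊤:ℕ∞) (fun p : ℝ × ℝ => F p.1 p.2)) (θ v : ℝ) :
    HasDerivAt (fun t => F t v) (pd1 F θ v) θ := by
  have h1 : HasDerivAt (fun t : ℝ => ((t, v) : ℝ × ℝ)) (1, 0) θ :=
    (hasDerivAt_id θ).prodMk (hasDerivAt_const θ v)
  rw [pd1_eq_fderiv hF]
  exact ((hF.differentiable (by simp) (θ, v)).hasFDerivAt).comp_hasDerivAt θ h1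

lemma hasDerivAt_pd2 (hF : ContDiff ℝ (⊤:ℕ∞) (fun p : ℝ × ℝ => F p.1 p.2)) (θ v : ℝ) :
    HasDerivAt (fun s => F θ s) (pd2 F θ v) v := by
  have h1 : HasDerivAt (fun s : ℝ => ((θ, s) : ℝ × ℝ)) (0, 1) v :=
    (hasDerivAt_const v θ).prodMk (hasDerivAt_id v)
  rw [pd2_eq_fderiv hF]
  exact ((hF.differentiable (by simp) (θ, v)).hasFDerivAt).comp_hasDerivAt v h1

lemma contDiff_pd1 (hF : ContDiff ℝ (⊤:ℕ∞) (fun p : ℝ × ℝ => F p.1 p.2)) :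
    ContDiff ℝ (⊤:ℕ∞) (fun p : ℝ × ℝ => pd1 F p.1 p.2) := by
  have h : ContDiff ℝ (⊤:ℕ∞)
      (fun p : ℝ × ℝ => fderiv ℝ (fun q : ℝ × ℝ => F q.1 q.2) p (1, 0)) :=
    (hF.fderiv_right (by exact_mod_cast le_top)).clm_apply contDiff_const
  have e : (fun p : ℝ × ℝ => pd1 F p.1 p.2)
      = fun p : ℝ × ℝ => fderiv ℝ (fun q : ℝ × ℝ => F q.1 q.2) p (1, 0) := by
    funext p
    exact pd1_eq_fderiv hF p.1 p.2
  rw [e]; exact h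

lemma contDiff_pd2 (hF : ContDiff ℝ (⊤:ℕ∞) (fun p : ℝ × ℝ => F p.1 p.2)) :
    ContDiff ℝ (⊤:ℕ∞) (fun p : ℝ × ℝ => pd2 F p.1 p.2) := by
  have h : ContDiff ℝ (⊤:ℕ∞)
      (fun p : ℝ × ℝ => fderiv ℝ (fun q : ℝ × ℝ => F q.1 q.2) p (0, 1)) :=
    (hF.fderiv_right (by exact_mod_cast le_top)).clm_apply contDiff_const
  have e : (fun p : ℝ × ℝ => pd2 F p.1 p.2)
      = fun p : ℝ × ℝ => fderiv ℝ (fun q : ℝ × ℝ => F q.1 q.2) p (0, 1) := by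
    funext p
    exact pd2_eq_fderiv hF p.1 p.2
  rw [e]; exact h

/-- functions as fderiv applications -/
lemma pd1_fun_eq (hF : ContDiff ℝ (⊤:ℕ∞) (fun p : ℝ × ℝ => F p.1 p.2)) :
    (fun p : ℝ × ℝ => pd1 F p.1 p.2)
      = fun p : ℝ × ℝ => fderiv ℝ (fun q : ℝ × ℝ => F q.1 q.2) p (1, 0) :=
  funext fun p => pd1_eq_fderiv hF p.1 p.2

lemma pd2_fun_eq (hF : ContDiff ℝ (⊤:ℕ∞) (fun p : ℝ × ℝ => F p.1 p.2)) :
    (fun p : ℝ × ℝ => pd2 F p.1 p.2)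
      = fun p : ℝ × ℝ => fderiv ℝ (fun q : ℝ × ℝ => F q.1 q.2) p (0, 1) :=
  funext fun p => pd2_eq_fderiv hF p.1 p.2

/-- second-derivative symmetry -/
lemma pd_symm (hF : ContDiff ℝ (⊤:ℕ∞) (fun p : ℝ × ℝ => F p.1 p.2)) (θ v : ℝ) :
    pd1 (pd2 F) θ v = pd2 (pd1 F) θ v := by
  have hsymm : IsSymmSndFDerivAt ℝ (fun p : ℝ × ℝ => F p.1 p.2) (θ, v) :=
    hF.contDiffAt.isSymmSndFDerivAt (by rw [minSmoothness_of_isRCLikeNormedField]; exact WithTop.coe_le_coe.mpr le_top)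
  have hdiff : DifferentiableAt ℝ (fderiv ℝ (fun q : ℝ × ℝ => F q.1 q.2)) (θ, v) :=
    ((hF.fderiv_right (m := (⊤:ℕ∞)) (by norm_cast)).differentiable
      (by norm_cast)) (θ, v)
  have key : ∀ a b : ℝ × ℝ,
      fderiv ℝ (fun p : ℝ × ℝ => fderiv ℝ (fun q : ℝ × ℝ => F q.1 q.2) p a) (θ, v) b
        = fderiv ℝ (fderiv ℝ (fun q : ℝ × ℝ => F q.1 q.2)) (θ, v) b a := by
    intro a b
    rw [fderiv_clm_apply hdiff (differentiableAt_const a)]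
    simp
  have h1 : pd1 (pd2 F) θ v
      = fderiv ℝ (fderiv ℝ (fun q : ℝ × ℝ => F q.1 q.2)) (θ, v) (1, 0) (0, 1) := by
    rw [pd1_eq_fderiv (contDiff_pd2 hF) θ v, pd2_fun_eq hF]
    exact key (0, 1) (1, 0)
  have h2 : pd2 (pd1 F) θ v
      = fderiv ℝ (fderiv ℝ (fun q : ℝ × ℝ => F q.1 q.2)) (θ, v) (0, 1) (1, 0) := by
    rw [pd2_eq_fderiv (contDiff_pd1 hF) θ v, pd1_fun_eq hF]
    exact key (1, 0) (0, 1)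
  rw [h1, h2, hsymm (1, 0) (0, 1)]

end helpers

section helpers2

variable {F G : ℝ → ℝ → ℝ}

lemma contDiff_shift (hF : ContDiff ℝ (⊤:ℕ∞) (fun p : ℝ × ℝ => F p.1 p.2))
    (hG : ContDiff ℝ (⊤:ℕ∞) (fun p : ℝ × ℝ => G p.1 p.2)) (s : ℝ) :
    ContDiff ℝ (⊤:ℕ∞) (fun p : ℝ × ℝ => F p.1 p.2 + s * G p.1 p.2) :=
  hF.add (contDiff_const.mul hG)

lemma pd1_shift (hF : ContDiff ℝ (⊤:ℕ∞) (fun p : ℝ × ℝ => F p.1 p.2))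
    (hG : ContDiff ℝ (⊤:ℕ∞) (fun p : ℝ × ℝ => G p.1 p.2)) (s θ v : ℝ) :
    pd1 (fun θ v => F θ v + s * G θ v) θ v = pd1 F θ v + s * pd1 G θ v :=
  ((hasDerivAt_pd1 hF θ v).add ((hasDerivAt_pd1 hG θ v).const_mul s)).deriv

lemma pd2_shift (hF : ContDiff ℝ (⊤:ℕ∞) (fun p : ℝ × ℝ => F p.1 p.2))
    (hG : ContDiff ℝ (⊤:ℕ∞) (fun p : ℝ × ℝ => G p.1 p.2)) (s θ v : ℝ) :
    pd2 (fun θ v => F θ v + s * G θ v) θ v = pd2 F θ v + s * pd2 G θ v :=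
  ((hasDerivAt_pd2 hF θ v).add ((hasDerivAt_pd2 hG θ v).const_mul s)).deriv

lemma pd21_shift (hF : ContDiff ℝ (⊤:ℕ∞) (fun p : ℝ × ℝ => F p.1 p.2))
    (hG : ContDiff ℝ (⊤:ℕ∞) (fun p : ℝ × ℝ => G p.1 p.2)) (s θ v : ℝ) :
    pd2 (pd1 (fun θ v => F θ v + s * G θ v)) θ v
      = pd2 (pd1 F) θ v + s * pd2 (pd1 G) θ v := by
  have e : (fun v' => pd1 (fun θ v => F θ v + s * G θ v) θ v')
      = fun v' => pd1 F θ v' + s * pd1 G θ v' :=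
    funext fun v' => pd1_shift hF hG s θ v'
  show deriv (fun v' => pd1 (fun θ v => F θ v + s * G θ v) θ v') v = _
  rw [e]
  exact ((hasDerivAt_pd2 (contDiff_pd1 hF) θ v).add
    ((hasDerivAt_pd2 (contDiff_pd1 hG) θ v).const_mul s)).deriv

/-- pd1 vanishes on an open set where F vanishes -/
lemma pd1_zero_on {O : Set (ℝ × ℝ)} (hO : IsOpen O)
    (h : ∀ q ∈ O, F q.1 q.2 = 0) : ∀ q ∈ O, pd1 F q.1 q.2 = 0 := by
  intro q hq
  have ht : Filter.Tendsto (fun t : ℝ => ((t, q.2) : ℝ × ℝ)) (nhds q.1) (nhds q) := by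
    have := (continuous_id.prodMk (continuous_const (y := q.2))).tendsto q.1
    simpa using this
  have hev : (fun t => F t q.2) =ᶠ[nhds q.1] (fun _ => (0:ℝ)) := by
    filter_upwards [ht (hO.mem_nhds hq)] with t htO
    exact h _ htO
  show deriv (fun t => F t q.2) q.1 = 0
  rw [hev.deriv_eq]
  simp

lemma pd2_zero_on {O : Set (ℝ × ℝ)} (hO : IsOpen O)
    (h : ∀ q ∈ O, F q.1 q.2 = 0) : ∀ q ∈ O, pd2 F q.1 q.2 = 0 := by
  intro q hq
  have ht : Filter.Tendsto (fun t : ℝ => ((q.1, t) : ℝ × ℝ)) (nhds q.2) (nhds q) := by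
    have := ((continuous_const (y := q.1)).prodMk continuous_id).tendsto q.2
    simpa using this
  have hev : (fun t => F q.1 t) =ᶠ[nhds q.2] (fun _ => (0:ℝ)) := by
    filter_upwards [ht (hO.mem_nhds hq)] with t htO
    exact h _ htO
  show deriv (fun t => F q.1 t) q.2 = 0
  rw [hev.deriv_eq]
  simp

end helpers2

/-- Generic derivative-in-`s` computation for the shifted Lagrangian density at a point. -/
lemma keyDeriv (a fa b fb u1 fu1 u2 fu2 v1 fv1 v2 fv2 w1 fw1 w2 fw2 u fu w fw s : ℝ) :
    HasDerivAt (fun s : ℝ =>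
      (-2 * (a + s * fa) - 4 * (b + s * fb) + 3 * (u1 + s * fu1) * (u2 + s * fu2)
        + (v1 + s * fv1) * (v2 + s * fv2) * (Real.cosh (w + s * fw))^2
        + (w1 + s * fw1) * (w2 + s * fw2)) * Real.exp (-(u + s * fu)))
      (((-2 * fa - 4 * fb
          + 3 * (fu1 * (u2 + s * fu2) + (u1 + s * fu1) * fu2)
          + ((fv1 * (v2 + s * fv2) + (v1 + s * fv1) * fv2) * (Real.cosh (w + s * fw))^2
            + (v1 + s * fv1) * (v2 + s * fv2)
              * (2 * Real.cosh (w + s * fw) * Real.sinh (w + s * fw) * fw))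
          + (fw1 * (w2 + s * fw2) + (w1 + s * fw1) * fw2)) * Real.exp (-(u + s * fu)))
        + (-2 * (a + s * fa) - 4 * (b + s * fb) + 3 * (u1 + s * fu1) * (u2 + s * fu2)
          + (v1 + s * fv1) * (v2 + s * fv2) * (Real.cosh (w + s * fw))^2
          + (w1 + s * fw1) * (w2 + s * fw2)) * (Real.exp (-(u + s * fu)) * (-fu))) s := by
  have hlin : ∀ c d : ℝ, HasDerivAt (fun s : ℝ => c + s * d) d s := fun c d => by
    simpa using ((hasDerivAt_id s).mul_const d).const_add c
  have h1 : HasDerivAt (fun s : ℝ => -2 * (a + s * fa)) (-2 * fa) s := (hlin a fa).const_mul (-2)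
  have h2 : HasDerivAt (fun s : ℝ => 4 * (b + s * fb)) (4 * fb) s := (hlin b fb).const_mul 4
  have h3 : HasDerivAt (fun s : ℝ => 3 * (u1 + s * fu1) * (u2 + s * fu2))
      (3 * fu1 * (u2 + s * fu2) + 3 * (u1 + s * fu1) * fu2) s :=
    ((hlin u1 fu1).const_mul 3).mul (hlin u2 fu2)
  have hcosh : HasDerivAt (fun s : ℝ => Real.cosh (w + s * fw))
      (Real.sinh (w + s * fw) * fw) s := (hlin w fw).cosh
  have hc2 : HasDerivAt (fun s : ℝ => (Real.cosh (w + s * fw))^2)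
      (2 * (Real.cosh (w + s * fw))^1 * (Real.sinh (w + s * fw) * fw)) s := hcosh.pow 2
  have hv : HasDerivAt (fun s : ℝ => (v1 + s * fv1) * (v2 + s * fv2)
        * (Real.cosh (w + s * fw))^2)
      ((fv1 * (v2 + s * fv2) + (v1 + s * fv1) * fv2) * (Real.cosh (w + s * fw))^2
        + (v1 + s * fv1) * (v2 + s * fv2)
          * (2 * (Real.cosh (w + s * fw))^1 * (Real.sinh (w + s * fw) * fw))) s :=
    ((hlin v1 fv1).mul (hlin v2 fv2)).mul hc2
  have hw : HasDerivAt (fun s : ℝ => (w1 + s * fw1) * (w2 + s * fw2))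
      (fw1 * (w2 + s * fw2) + (w1 + s * fw1) * fw2) s := (hlin w1 fw1).mul (hlin w2 fw2)
  have hB := (((h1.sub h2).add h3).add hv).add hw
  have hE : HasDerivAt (fun s : ℝ => Real.exp (-(u + s * fu)))
      (Real.exp (-(u + s * fu)) * (-fu)) s := by
    have := ((hlin u fu).neg).exp
    simpa using this
  have H := hB.mul hE
  refine H.congr_deriv ?_
  simp only [Pi.add_apply, Pi.sub_apply]
  ring

section divergence

variable {H : ℝ → ℝ → ℝ}

lemma slice1_contDiff (hH : ContDiff ℝ (⊤:ℕ∞) (fun p : ℝ × ℝ => H p.1 p.2)) (y : ℝ) :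
    ContDiff ℝ (⊤:ℕ∞) (fun t => H t y) :=
  hH.comp (contDiff_id.prodMk contDiff_const)

lemma slice1_hcs (hs : HasCompactSupport (fun p : ℝ × ℝ => H p.1 p.2)) (y : ℝ) :
    HasCompactSupport (fun t => H t y) := by
  apply HasCompactSupport.intro (hs.image continuous_fst)
  intro t ht
  by_contra hne
  exact ht ⟨(t, y), subset_tsupport _ hne, rfl⟩

lemma slice2_contDiff (hH : ContDiff ℝ (⊤:ℕ∞) (fun p : ℝ × ℝ => H p.1 p.2)) (x : ℝ) :
    ContDiff ℝ (⊤:ℕ∞) (fun t => H x t) :=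
  hH.comp (contDiff_const.prodMk contDiff_id)

lemma slice2_hcs (hs : HasCompactSupport (fun p : ℝ × ℝ => H p.1 p.2)) (x : ℝ) :
    HasCompactSupport (fun t => H x t) := by
  apply HasCompactSupport.intro (hs.image continuous_snd)
  intro t ht
  by_contra hne
  exact ht ⟨(x, t), subset_tsupport _ hne, rfl⟩

lemma integral_deriv1_zero (hH : ContDiff ℝ (⊤:ℕ∞) (fun p : ℝ × ℝ => H p.1 p.2))
    (hs : HasCompactSupport (fun p : ℝ × ℝ => H p.1 p.2)) (y : ℝ) :
    ∫ t : ℝ, pd1 H t y = 0 := by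
  have hf1 : ContDiff ℝ 1 (fun t => H t y) :=
    (slice1_contDiff hH y).of_le (by exact_mod_cast le_top)
  have hsf : HasCompactSupport (fun t => H t y) := slice1_hcs hs y
  have hderiv_eq : (fun t : ℝ => pd1 H t y) = deriv (fun t => H t y) := rfl
  have hcont : Continuous (fun t : ℝ => pd1 H t y) :=
    (contDiff_pd1 hH).continuous.comp (continuous_id.prodMk continuous_const)
  have hint : Integrable (deriv (fun t => H t y)) := by
    rw [← hderiv_eq]
    exact hcont.integrable_of_hasCompactSupport (hderiv_eq ▸ hsf.deriv)
  calc ∫ t : ℝ, pd1 H t y = ∫ t : ℝ, deriv (fun t => H t y) t := rfl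
    _ = (∫ t in Set.Iic (0:ℝ), deriv (fun t => H t y) t)
        + ∫ t in Set.Ioi (0:ℝ), deriv (fun t => H t y) t :=
      (intervalIntegral.integral_Iic_add_Ioi hint.integrableOn hint.integrableOn).symm
    _ = H 0 y + -(H 0 y) := by
      rw [hsf.integral_Iic_deriv_eq hf1 0, hsf.integral_Ioi_deriv_eq hf1 0]
    _ = 0 := by ring

lemma integral_deriv2_zero (hH : ContDiff ℝ (⊤:ℕ∞) (fun p : ℝ × ℝ => H p.1 p.2))
    (hs : HasCompactSupport (fun p : ℝ × ℝ => H p.1 p.2)) (x : ℝ) :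
    ∫ t : ℝ, pd2 H x t = 0 := by
  have hf1 : ContDiff ℝ 1 (fun t => H x t) :=
    (slice2_contDiff hH x).of_le (by exact_mod_cast le_top)
  have hsf : HasCompactSupport (fun t => H x t) := slice2_hcs hs x
  have hderiv_eq : (fun t : ℝ => pd2 H x t) = deriv (fun t => H x t) := rfl
  have hcont : Continuous (fun t : ℝ => pd2 H x t) :=
    (contDiff_pd2 hH).continuous.comp (continuous_const.prodMk continuous_id)
  have hint : Integrable (deriv (fun t => H x t)) := by
    rw [← hderiv_eq]
    exact hcont.integrable_of_hasCompactSupport (hderiv_eq ▸ hsf.deriv)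
  calc ∫ t : ℝ, pd2 H x t = ∫ t : ℝ, deriv (fun t => H x t) t := rfl
    _ = (∫ t in Set.Iic (0:ℝ), deriv (fun t => H x t) t)
        + ∫ t in Set.Ioi (0:ℝ), deriv (fun t => H x t) t :=
      (intervalIntegral.integral_Iic_add_Ioi hint.integrableOn hint.integrableOn).symm
    _ = H x 0 + -(H x 0) := by
      rw [hsf.integral_Iic_deriv_eq hf1 0, hsf.integral_Ioi_deriv_eq hf1 0]
    _ = 0 := by ring

lemma pd1_hcs (hH : ContDiff ℝ (⊤:ℕ∞) (fun p : ℝ × ℝ => H p.1 p.2))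
    (hs : HasCompactSupport (fun p : ℝ × ℝ => H p.1 p.2)) :
    HasCompactSupport (fun p : ℝ × ℝ => pd1 H p.1 p.2) := by
  apply HasCompactSupport.intro hs
  intro p hp
  exact pd1_zero_on (O := (tsupport (fun p : ℝ × ℝ => H p.1 p.2))ᶜ)
    (isOpen_compl_iff.mpr (isClosed_tsupport _))
    (fun q hq => image_eq_zero_of_notMem_tsupport (f := fun p : ℝ × ℝ => H p.1 p.2) hq) p hp

lemma pd2_hcs (hH : ContDiff ℝ (⊤:ℕ∞) (fun p : ℝ × ℝ => H p.1 p.2))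
    (hs : HasCompactSupport (fun p : ℝ × ℝ => H p.1 p.2)) :
    HasCompactSupport (fun p : ℝ × ℝ => pd2 H p.1 p.2) := by
  apply HasCompactSupport.intro hs
  intro p hp
  exact pd2_zero_on (O := (tsupport (fun p : ℝ × ℝ => H p.1 p.2))ᶜ)
    (isOpen_compl_iff.mpr (isClosed_tsupport _))
    (fun q hq => image_eq_zero_of_notMem_tsupport (f := fun p : ℝ × ℝ => H p.1 p.2) hq) p hp

lemma integral_pd1_zero (hH : ContDiff ℝ (⊤:ℕ∞) (fun p : ℝ × ℝ => H p.1 p.2))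
    (hs : HasCompactSupport (fun p : ℝ × ℝ => H p.1 p.2)) :
    ∫ p : ℝ × ℝ, pd1 H p.1 p.2 = 0 := by
  have hint : Integrable (fun p : ℝ × ℝ => pd1 H p.1 p.2)
      ((volume : Measure ℝ).prod (volume : Measure ℝ)) := by
    rw [← MeasureTheory.Measure.volume_eq_prod]
    exact (contDiff_pd1 hH).continuous.integrable_of_hasCompactSupport (pd1_hcs hH hs)
  calc ∫ p : ℝ × ℝ, pd1 H p.1 p.2
      = ∫ p : ℝ × ℝ, pd1 H p.1 p.2 ∂((volume : Measure ℝ).prod volume) := by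
        rw [← MeasureTheory.Measure.volume_eq_prod]
    _ = ∫ x : ℝ, ∫ y : ℝ, pd1 H x y := MeasureTheory.integral_prod _ hint
    _ = ∫ y : ℝ, ∫ x : ℝ, pd1 H x y := MeasureTheory.integral_integral_swap hint
    _ = ∫ y : ℝ, (0:ℝ) := by
        congr 1; funext y; exact integral_deriv1_zero hH hs y
    _ = 0 := integral_zero _ _

lemma integral_pd2_zero (hH : ContDiff ℝ (⊤:ℕ∞) (fun p : ℝ × ℝ => H p.1 p.2))
    (hs : HasCompactSupport (fun p : ℝ × ℝ => H p.1 p.2)) :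
    ∫ p : ℝ × ℝ, pd2 H p.1 p.2 = 0 := by
  have hint : Integrable (fun p : ℝ × ℝ => pd2 H p.1 p.2)
      ((volume : Measure ℝ).prod (volume : Measure ℝ)) := by
    rw [← MeasureTheory.Measure.volume_eq_prod]
    exact (contDiff_pd2 hH).continuous.integrable_of_hasCompactSupport (pd2_hcs hH hs)
  calc ∫ p : ℝ × ℝ, pd2 H p.1 p.2
      = ∫ p : ℝ × ℝ, pd2 H p.1 p.2 ∂((volume : Measure ℝ).prod volume) := by
        rw [← MeasureTheory.Measure.volume_eq_prod]
    _ = ∫ x : ℝ, ∫ y : ℝ, pd2 H x y := MeasureTheory.integral_prod _ hint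
    _ = ∫ x : ℝ, (0:ℝ) := by
        congr 1; funext x; exact integral_deriv2_zero hH hs x
    _ = 0 := integral_zero _ _

end divergence


section keycont
variable {α : Type*} [TopologicalSpace α]

lemma keyContF (a fa b fb u1 fu1 u2 fu2 v1 fv1 v2 fv2 w1 fw1 w2 fw2 u fu w fw s : α → ℝ)
    (ha : Continuous a) (hfa : Continuous fa) (hb : Continuous b) (hfb : Continuous fb)
    (hu1 : Continuous u1) (hfu1 : Continuous fu1) (hu2 : Continuous u2) (hfu2 : Continuous fu2)
    (hv1 : Continuous v1) (hfv1 : Continuous fv1) (hv2 : Continuous v2) (hfv2 : Continuous fv2)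
    (hw1 : Continuous w1) (hfw1 : Continuous fw1) (hw2 : Continuous w2) (hfw2 : Continuous fw2)
    (hu : Continuous u) (hfu : Continuous fu) (hw : Continuous w) (hfw : Continuous fw)
    (hs : Continuous s) :
    Continuous (fun x : α => (-2 * ((a x) + (s x) * (fa x)) - 4 * ((b x) + (s x) * (fb x)) + 3 * ((u1 x) + (s x) * (fu1 x)) * ((u2 x) + (s x) * (fu2 x)) + ((v1 x) + (s x) * (fv1 x)) * ((v2 x) + (s x) * (fv2 x)) * (Real.cosh ((w x) + (s x) * (fw x)))^2 + ((w1 x) + (s x) * (fw1 x)) * ((w2 x) + (s x) * (fw2 x))) * Real.exp (-((u x) + (s x) * (fu x)))) := by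
  fun_prop

lemma keyContG (a fa b fb u1 fu1 u2 fu2 v1 fv1 v2 fv2 w1 fw1 w2 fw2 u fu w fw s : α → ℝ)
    (ha : Continuous a) (hfa : Continuous fa) (hb : Continuous b) (hfb : Continuous fb)
    (hu1 : Continuous u1) (hfu1 : Continuous fu1) (hu2 : Continuous u2) (hfu2 : Continuous fu2)
    (hv1 : Continuous v1) (hfv1 : Continuous fv1) (hv2 : Continuous v2) (hfv2 : Continuous fv2)
    (hw1 : Continuous w1) (hfw1 : Continuous fw1) (hw2 : Continuous w2) (hfw2 : Continuous fw2)
    (hu : Continuous u) (hfu : Continuous fu) (hw : Continuous w) (hfw : Continuous fw)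
    (hs : Continuous s) :
    Continuous (fun x : α => ((-2 * (fa x) - 4 * (fb x) + 3 * ((fu1 x) * ((u2 x) + (s x) * (fu2 x)) + ((u1 x) + (s x) * (fu1 x)) * (fu2 x)) + (((fv1 x) * ((v2 x) + (s x) * (fv2 x)) + ((v1 x) + (s x) * (fv1 x)) * (fv2 x)) * (Real.cosh ((w x) + (s x) * (fw x)))^2 + ((v1 x) + (s x) * (fv1 x)) * ((v2 x) + (s x) * (fv2 x)) * (2 * Real.cosh ((w x) + (s x) * (fw x)) * Real.sinh ((w x) + (s x) * (fw x)) * (fw x))) + ((fw1 x) * ((w2 x) + (s x) * (fw2 x)) + ((w1 x) + (s x) * (fw1 x)) * (fw2 x))) * Real.exp (-((u x) + (s x) * (fu x)))) + (-2 * ((a x) + (s x) * (fa x)) - 4 * ((b x) + (s x) * (fb x)) + 3 * ((u1 x) + (s x) * (fu1 x)) * ((u2 x) + (s x) * (fu2 x)) + ((v1 x) + (s x) * (fv1 x)) * ((v2 x) + (s x) * (fv2 x)) * (Real.cosh ((w x) + (s x) * (fw x)))^2 + ((w1 x) + (s x) * (fw1 x)) * ((w2 x) + (s x) * (fw2 x)))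 * (Real.exp (-((u x) + (s x) * (fu x))) * (-(fu x)))) := by
  fun_prop

end keycont

set_option maxHeartbeats 2000000 in
/-- Solutions of the non-polarized colliding plane wave evolution equations are critical
points of the asymptotic action: for all smooth compactly supported variations, the
function `s ↦ ∫ L[M + sφ_M, U + sφ_U, V + sφ_V, W + sφ_W]` has derivative zero at
`s = 0`. -/
theorem asymptotic_action_critical
    (M U V W : ℝ → ℝ → ℝ)
    (hM : ContDiff ℝ (⊤ : ℕ∞) (fun p : ℝ × ℝ => M p.1 p.2))
    (hU : ContDiff ℝ (⊤ : ℕ∞) (fun p : ℝ × ℝ => U p.1 p.2))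
    (hV : ContDiff ℝ (⊤ : ℕ∞) (fun p : ℝ × ℝ => V p.1 p.2))
    (hW : ContDiff ℝ (⊤ : ℕ∞) (fun p : ℝ × ℝ => W p.1 p.2))
    (e1 : ∀ θ v, pd2 (pd1 U) θ v = pd1 U θ v * pd2 U θ v)
    (e2 : ∀ θ v, pd2 (pd1 V) θ v
        = (1/2) * (pd1 U θ v * pd2 V θ v + pd2 U θ v * pd1 V θ v)
          - (pd1 V θ v * pd2 W θ v + pd2 V θ v * pd1 W θ v) * Real.tanh (W θ v))
    (e3 : ∀ θ v, pd2 (pd1 W) θ v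
        = (1/2) * (pd1 U θ v * pd2 W θ v + pd2 U θ v * pd1 W θ v)
          + pd1 V θ v * pd2 V θ v * Real.sinh (W θ v) * Real.cosh (W θ v))
    (e4 : ∀ θ v, pd2 (pd1 M) θ v
        = (1/2) * (-(pd1 U θ v * pd2 U θ v)
            + pd1 V θ v * pd2 V θ v * (Real.cosh (W θ v))^2
            + pd1 W θ v * pd2 W θ v)) :
    ∀ φM φU φV φW : ℝ → ℝ → ℝ,
      ContDiff ℝ (⊤ : ℕ∞) (fun p : ℝ × ℝ => φM p.1 p.2) →
      HasCompactSupport (fun p : ℝ × ℝ => φM p.1 p.2) →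
      ContDiff ℝ (⊤ : ℕ∞) (fun p : ℝ × ℝ => φU p.1 p.2) →
      HasCompactSupport (fun p : ℝ × ℝ => φU p.1 p.2) →
      ContDiff ℝ (⊤ : ℕ∞) (fun p : ℝ × ℝ => φV p.1 p.2) →
      HasCompactSupport (fun p : ℝ × ℝ => φV p.1 p.2) →
      ContDiff ℝ (⊤ : ℕ∞) (fun p : ℝ × ℝ => φW p.1 p.2) →
      HasCompactSupport (fun p : ℝ × ℝ => φW p.1 p.2) →
      HasDerivAt (fun s : ℝ =>
        ∫ p : ℝ × ℝ,
          Ldens (fun θ v => M θ v + s * φM θ v) (fun θ v => U θ v + s * φU θ v)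
            (fun θ v => V θ v + s * φV θ v) (fun θ v => W θ v + s * φW θ v) p.1 p.2)
        0 0 := by
  intro φM φU φV φW hφM hφMs hφU hφUs hφV hφVs hφW hφWs
  -- the shifted integrand in closed form
  have hFeq : ∀ (s : ℝ) (p : ℝ × ℝ),
      Ldens (fun θ v => M θ v + s * φM θ v) (fun θ v => U θ v + s * φU θ v) (fun θ v => V θ v + s * φV θ v) (fun θ v => W θ v + s * φW θ v) p.1 p.2
        = (-2 * (pd2 (pd1 M) p.1 p.2 + s * pd2 (pd1 φM) p.1 p.2) - 4 * (pd2 (pd1 U) p.1 p.2 + s * pd2 (pd1 φU) p.1 p.2) + 3 * (pd1 U p.1 p.2 + s * pd1 φU p.1 p.2) * (pd2 U p.1 p.2 + s * pd2 φU p.1 p.2) + (pd1 V p.1 p.2 + s * pd1 φV p.1 p.2) * (pd2 V p.1 p.2 + s * pd2 φV p.1 p.2) * (Real.cosh (W p.1 p.2 + s * φW p.1 p.2))^2 + (pd1 W p.1 p.2 + s * pd1 φW p.1 p.2) * (pd2 W p.1 p.2 + s * pd2 φW p.1 p.2)) * Real.exp (-(U p.1 p.2 + s * φU p.1 p.2))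 := by
    intro s p
    simp only [Ldens]
    rw [pd21_shift hM hφM s p.1 p.2, pd21_shift hU hφU s p.1 p.2, pd1_shift hU hφU s p.1 p.2,
      pd2_shift hU hφU s p.1 p.2, pd1_shift hV hφV s p.1 p.2, pd2_shift hV hφV s p.1 p.2,
      pd1_shift hW hφW s p.1 p.2, pd2_shift hW hφW s p.1 p.2]
  -- pointwise derivative in s
  have hder : ∀ (p : ℝ × ℝ) (s : ℝ),
      HasDerivAt (fun s : ℝ => Ldens (fun θ v => M θ v + s * φM θ v) (fun θ v => U θ v + s * φU θ v) (fun θ v => V θ v + s * φV θ v) (fun θ v => W θ v + s * φW θ v) p.1 p.2)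
        (((-2 * pd2 (pd1 φM) p.1 p.2 - 4 * pd2 (pd1 φU) p.1 p.2 + 3 * (pd1 φU p.1 p.2 * (pd2 U p.1 p.2 + s * pd2 φU p.1 p.2) + (pd1 U p.1 p.2 + s * pd1 φU p.1 p.2) * pd2 φU p.1 p.2) + ((pd1 φV p.1 p.2 * (pd2 V p.1 p.2 + s * pd2 φV p.1 p.2) + (pd1 V p.1 p.2 + s * pd1 φV p.1 p.2) * pd2 φV p.1 p.2) * (Real.cosh (W p.1 p.2 + s * φW p.1 p.2))^2 + (pd1 V p.1 p.2 + s * pd1 φV p.1 p.2) * (pd2 V p.1 p.2 + s * pd2 φV p.1 p.2) * (2 * Real.cosh (W p.1 p.2 + s * φW p.1 p.2) * Real.sinh (W p.1 p.2 + s * φW p.1 p.2) * φW p.1 p.2)) + (pd1 φW p.1 p.2 * (pd2 W p.1 p.2 + s * pd2 φW p.1 p.2) + (pd1 W p.1 p.2 + s * pd1 φW p.1 p.2) * pd2 φW p.1 p.2)) * Real.exp (-(U p.1 p.2 + s * φU p.1 p.2))) + (-2 * (pd2 (pd1 M) p.1 p.2 + s * pd2 (pd1 φM) p.1 p.2) -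 4 * (pd2 (pd1 U) p.1 p.2 + s * pd2 (pd1 φU) p.1 p.2) + 3 * (pd1 U p.1 p.2 + s * pd1 φU p.1 p.2) * (pd2 U p.1 p.2 + s * pd2 φU p.1 p.2) + (pd1 V p.1 p.2 + s * pd1 φV p.1 p.2) * (pd2 V p.1 p.2 + s * pd2 φV p.1 p.2) * (Real.cosh (W p.1 p.2 + s * φW p.1 p.2))^2 + (pd1 W p.1 p.2 + s * pd1 φW p.1 p.2) * (pd2 W p.1 p.2 + s * pd2 φW p.1 p.2)) * (Real.exp (-(U p.1 p.2 + s * φU p.1 p.2)) * (-φU p.1 p.2))) s := by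
    intro p s
    have heq : (fun s : ℝ => Ldens (fun θ v => M θ v + s * φM θ v) (fun θ v => U θ v + s * φU θ v) (fun θ v => V θ v + s * φV θ v) (fun θ v => W θ v + s * φW θ v) p.1 p.2)
        = (fun s : ℝ => (-2 * (pd2 (pd1 M) p.1 p.2 + s * pd2 (pd1 φM) p.1 p.2) - 4 * (pd2 (pd1 U) p.1 p.2 + s * pd2 (pd1 φU) p.1 p.2) + 3 * (pd1 U p.1 p.2 + s * pd1 φU p.1 p.2) * (pd2 U p.1 p.2 + s * pd2 φU p.1 p.2) + (pd1 V p.1 p.2 + s * pd1 φV p.1 p.2) * (pd2 V p.1 p.2 + s * pd2 φV p.1 p.2) * (Real.cosh (W p.1 p.2 + s * φW p.1 p.2))^2 + (pd1 W p.1 p.2 + s * pd1 φW p.1 p.2) * (pd2 W p.1 p.2 + s * pd2 φW p.1 p.2)) * Real.exp (-(U p.1 p.2 + s * φU p.1 p.2))) := funext fun s => hFeq s p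
    rw [heq]
    exact keyDeriv (pd2 (pd1 M) p.1 p.2) (pd2 (pd1 φM) p.1 p.2) (pd2 (pd1 U) p.1 p.2) (pd2 (pd1 φU) p.1 p.2) (pd1 U p.1 p.2) (pd1 φU p.1 p.2) (pd2 U p.1 p.2) (pd2 φU p.1 p.2) (pd1 V p.1 p.2) (pd1 φV p.1 p.2) (pd2 V p.1 p.2) (pd2 φV p.1 p.2) (pd1 W p.1 p.2) (pd1 φW p.1 p.2) (pd2 W p.1 p.2) (pd2 φW p.1 p.2) (U p.1 p.2) (φU p.1 p.2) (W p.1 p.2) (φW p.1 p.2) s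
  -- continuity facts
  have hcontF : ∀ s : ℝ, Continuous (fun p : ℝ × ℝ => Ldens (fun θ v => M θ v + s * φM θ v) (fun θ v => U θ v + s * φU θ v) (fun θ v => V θ v + s * φV θ v) (fun θ v => W θ v + s * φW θ v) p.1 p.2) := by
    intro s
    have he : (fun p : ℝ × ℝ => Ldens (fun θ v => M θ v + s * φM θ v) (fun θ v => U θ v + s * φU θ v) (fun θ v => V θ v + s * φV θ v) (fun θ v => W θ v + s * φW θ v) p.1 p.2)
        = (fun p : ℝ × ℝ => (-2 * (pd2 (pd1 M) p.1 p.2 + s * pd2 (pd1 φM) p.1 p.2) - 4 * (pd2 (pd1 U) p.1 p.2 + s * pd2 (pd1 φU) p.1 p.2) + 3 * (pd1 U p.1 p.2 + s * pd1 φU p.1 p.2) * (pd2 U p.1 p.2 + s * pd2 φU p.1 p.2) + (pd1 V p.1 p.2 + s * pd1 φV p.1 p.2) * (pd2 V p.1 p.2 + s * pd2 φV p.1 p.2) * (Real.cosh (W p.1 p.2 + s * φW p.1 p.2))^2 + (pd1 W p.1 p.2 + s * pd1 φW p.1 p.2) * (pd2 W p.1 p.2 + s * pd2 φW p.1 p.2))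 * Real.exp (-(U p.1 p.2 + s * φU p.1 p.2))) := funext fun p => hFeq s p
    rw [he]
    exact keyContF (fun p : ℝ × ℝ => pd2 (pd1 M) p.1 p.2) (fun p : ℝ × ℝ => pd2 (pd1 φM) p.1 p.2) (fun p : ℝ × ℝ => pd2 (pd1 U) p.1 p.2) (fun p : ℝ × ℝ => pd2 (pd1 φU) p.1 p.2) (fun p : ℝ × ℝ => pd1 U p.1 p.2) (fun p : ℝ × ℝ => pd1 φU p.1 p.2) (fun p : ℝ × ℝ => pd2 U p.1 p.2) (fun p : ℝ × ℝ => pd2 φU p.1 p.2) (fun p : ℝ × ℝ => pd1 V p.1 p.2) (fun p : ℝ × ℝ => pd1 φV p.1 p.2) (fun p : ℝ × ℝ => pd2 V p.1 p.2) (fun p : ℝ × ℝ => pd2 φV p.1 p.2) (fun p : ℝ × ℝ => pd1 W p.1 p.2) (fun p : ℝ × ℝ => pd1 φW p.1 p.2) (fun p : ℝ × ℝ => pd2 W p.1 p.2) (fun p : ℝ × ℝ => pd2 φW p.1 p.2) (fun p : ℝ × ℝ => U p.1 p.2) (fun p : ℝ × ℝ => φU p.1 p.2) (fun p : ℝ ×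 ℝ => W p.1 p.2) (fun p : ℝ × ℝ => φW p.1 p.2) (fun _ : ℝ × ℝ => s)
      ((contDiff_pd2 (contDiff_pd1 hM)).continuous) ((contDiff_pd2 (contDiff_pd1 hφM)).continuous) ((contDiff_pd2 (contDiff_pd1 hU)).continuous) ((contDiff_pd2 (contDiff_pd1 hφU)).continuous) ((contDiff_pd1 hU).continuous) ((contDiff_pd1 hφU).continuous) ((contDiff_pd2 hU).continuous) ((contDiff_pd2 hφU).continuous) ((contDiff_pd1 hV).continuous) ((contDiff_pd1 hφV).continuous) ((contDiff_pd2 hV).continuous) ((contDiff_pd2 hφV).continuous) ((contDiff_pd1 hW).continuous) ((contDiff_pd1 hφW).continuous) ((contDiff_pd2 hW).continuous) ((contDiff_pd2 hφW).continuous) (hU.continuous) (hφU.continuous) (hW.continuous) (hφW.continuous) (continuous_const)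
  have hGc : Continuous (fun q : ℝ × (ℝ × ℝ) => ((-2 * pd2 (pd1 φM) q.2.1 q.2.2 - 4 * pd2 (pd1 φU) q.2.1 q.2.2 + 3 * (pd1 φU q.2.1 q.2.2 * (pd2 U q.2.1 q.2.2 + q.1 * pd2 φU q.2.1 q.2.2) + (pd1 U q.2.1 q.2.2 + q.1 * pd1 φU q.2.1 q.2.2) * pd2 φU q.2.1 q.2.2) + ((pd1 φV q.2.1 q.2.2 * (pd2 V q.2.1 q.2.2 + q.1 * pd2 φV q.2.1 q.2.2) + (pd1 V q.2.1 q.2.2 + q.1 * pd1 φV q.2.1 q.2.2) * pd2 φV q.2.1 q.2.2) * (Real.cosh (W q.2.1 q.2.2 + q.1 * φW q.2.1 q.2.2))^2 + (pd1 V q.2.1 q.2.2 + q.1 * pd1 φV q.2.1 q.2.2) * (pd2 V q.2.1 q.2.2 + q.1 * pd2 φV q.2.1 q.2.2) * (2 * Real.cosh (W q.2.1 q.2.2 + q.1 * φW q.2.1 q.2.2) * Real.sinh (W q.2.1 q.2.2 + q.1 * φW q.2.1 q.2.2) * φW q.2.1 q.2.2)) + (pd1 φW q.2.1 q.2.2 *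 (pd2 W q.2.1 q.2.2 + q.1 * pd2 φW q.2.1 q.2.2) + (pd1 W q.2.1 q.2.2 + q.1 * pd1 φW q.2.1 q.2.2) * pd2 φW q.2.1 q.2.2)) * Real.exp (-(U q.2.1 q.2.2 + q.1 * φU q.2.1 q.2.2))) + (-2 * (pd2 (pd1 M) q.2.1 q.2.2 + q.1 * pd2 (pd1 φM) q.2.1 q.2.2) - 4 * (pd2 (pd1 U) q.2.1 q.2.2 + q.1 * pd2 (pd1 φU) q.2.1 q.2.2) + 3 * (pd1 U q.2.1 q.2.2 + q.1 * pd1 φU q.2.1 q.2.2) * (pd2 U q.2.1 q.2.2 + q.1 * pd2 φU q.2.1 q.2.2) + (pd1 V q.2.1 q.2.2 + q.1 * pd1 φV q.2.1 q.2.2) * (pd2 V q.2.1 q.2.2 + q.1 * pd2 φV q.2.1 q.2.2) * (Real.cosh (W q.2.1 q.2.2 + q.1 * φW q.2.1 q.2.2))^2 + (pd1 W q.2.1 q.2.2 + q.1 * pd1 φW q.2.1 q.2.2) * (pd2 W q.2.1 q.2.2 + q.1 * pd2 φW q.2.1 q.2.2)) * (Real.exp (-(U q.2.1 q.2.2 +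 q.1 * φU q.2.1 q.2.2)) * (-φU q.2.1 q.2.2))) :=
    keyContG (fun q : ℝ × (ℝ × ℝ) => pd2 (pd1 M) q.2.1 q.2.2) (fun q : ℝ × (ℝ × ℝ) => pd2 (pd1 φM) q.2.1 q.2.2) (fun q : ℝ × (ℝ × ℝ) => pd2 (pd1 U) q.2.1 q.2.2) (fun q : ℝ × (ℝ × ℝ) => pd2 (pd1 φU) q.2.1 q.2.2) (fun q : ℝ × (ℝ × ℝ) => pd1 U q.2.1 q.2.2) (fun q : ℝ × (ℝ × ℝ) => pd1 φU q.2.1 q.2.2) (fun q : ℝ × (ℝ × ℝ) => pd2 U q.2.1 q.2.2) (fun q : ℝ × (ℝ × ℝ) => pd2 φU q.2.1 q.2.2) (fun q : ℝ × (ℝ × ℝ) => pd1 V q.2.1 q.2.2) (fun q : ℝ × (ℝ × ℝ) => pd1 φV q.2.1 q.2.2) (fun q : ℝ × (ℝ × ℝ) => pd2 V q.2.1 q.2.2) (fun q : ℝ × (ℝ × ℝ) => pd2 φV q.2.1 q.2.2) (fun q : ℝ × (ℝ × ℝ) => pd1 W q.2.1 q.2.2) (fun q : ℝ × (ℝ ×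 ℝ) => pd1 φW q.2.1 q.2.2) (fun q : ℝ × (ℝ × ℝ) => pd2 W q.2.1 q.2.2) (fun q : ℝ × (ℝ × ℝ) => pd2 φW q.2.1 q.2.2) (fun q : ℝ × (ℝ × ℝ) => U q.2.1 q.2.2) (fun q : ℝ × (ℝ × ℝ) => φU q.2.1 q.2.2) (fun q : ℝ × (ℝ × ℝ) => W q.2.1 q.2.2) (fun q : ℝ × (ℝ × ℝ) => φW q.2.1 q.2.2) (fun q : ℝ × (ℝ × ℝ) => q.1)
      (((contDiff_pd2 (contDiff_pd1 hM)).continuous).comp continuous_snd) (((contDiff_pd2 (contDiff_pd1 hφM)).continuous).comp continuous_snd) (((contDiff_pd2 (contDiff_pd1 hU)).continuous).comp continuous_snd) (((contDiff_pd2 (contDiff_pd1 hφU)).continuous).comp continuous_snd) (((contDiff_pd1 hU).continuous).comp continuous_snd) (((contDiff_pd1 hφU).continuous).comp continuous_snd) (((contDiff_pd2 hU).continuous).comp continuous_snd) (((contDiff_pd2 hφU).continuous).comp continuous_snd) (((contDiff_pd1 hV).continuous).comp continuous_snd) (((contDiff_pd1 hφV).continuous).comp continuous_snd) (((contDiff_pd2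 hV).continuous).comp continuous_snd) (((contDiff_pd2 hφV).continuous).comp continuous_snd) (((contDiff_pd1 hW).continuous).comp continuous_snd) (((contDiff_pd1 hφW).continuous).comp continuous_snd) (((contDiff_pd2 hW).continuous).comp continuous_snd) (((contDiff_pd2 hφW).continuous).comp continuous_snd) ((hU.continuous).comp continuous_snd) ((hφU.continuous).comp continuous_snd) ((hW.continuous).comp continuous_snd) ((hφW.continuous).comp continuous_snd) (continuous_fst)
  have hG0c : Continuous (fun p : ℝ × ℝ => ((-2 * pd2 (pd1 φM) p.1 p.2 - 4 * pd2 (pd1 φU) p.1 p.2 + 3 * (pd1 φU p.1 p.2 * (pd2 U p.1 p.2 + 0 * pd2 φU p.1 p.2) + (pd1 U p.1 p.2 + 0 * pd1 φU p.1 p.2) * pd2 φU p.1 p.2) + ((pd1 φV p.1 p.2 * (pd2 V p.1 p.2 + 0 * pd2 φV p.1 p.2) + (pd1 V p.1 p.2 + 0 * pd1 φV p.1 p.2) * pd2 φV p.1 p.2) * (Real.cosh (W p.1 p.2 + 0 * φW p.1 p.2))^2 + (pd1 V p.1 p.2 + 0 * pd1 φV p.1 p.2) * (pd2 V p.1 p.2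 + 0 * pd2 φV p.1 p.2) * (2 * Real.cosh (W p.1 p.2 + 0 * φW p.1 p.2) * Real.sinh (W p.1 p.2 + 0 * φW p.1 p.2) * φW p.1 p.2)) + (pd1 φW p.1 p.2 * (pd2 W p.1 p.2 + 0 * pd2 φW p.1 p.2) + (pd1 W p.1 p.2 + 0 * pd1 φW p.1 p.2) * pd2 φW p.1 p.2)) * Real.exp (-(U p.1 p.2 + 0 * φU p.1 p.2))) + (-2 * (pd2 (pd1 M) p.1 p.2 + 0 * pd2 (pd1 φM) p.1 p.2) - 4 * (pd2 (pd1 U) p.1 p.2 + 0 * pd2 (pd1 φU) p.1 p.2) + 3 * (pd1 U p.1 p.2 + 0 * pd1 φU p.1 p.2) * (pd2 U p.1 p.2 + 0 * pd2 φU p.1 p.2) + (pd1 V p.1 p.2 + 0 * pd1 φV p.1 p.2) * (pd2 V p.1 p.2 + 0 * pd2 φV p.1 p.2) * (Real.cosh (W p.1 p.2 + 0 * φW p.1 p.2))^2 + (pd1 W p.1 p.2 + 0 * pd1 φW p.1 p.2) * (pd2 W p.1 p.2 + 0 * pd2 φW p.1 p.2)) * (Real.exp (-(U p.1 p.2 +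 0 * φU p.1 p.2)) * (-φU p.1 p.2))) :=
    keyContG (fun p : ℝ × ℝ => pd2 (pd1 M) p.1 p.2) (fun p : ℝ × ℝ => pd2 (pd1 φM) p.1 p.2) (fun p : ℝ × ℝ => pd2 (pd1 U) p.1 p.2) (fun p : ℝ × ℝ => pd2 (pd1 φU) p.1 p.2) (fun p : ℝ × ℝ => pd1 U p.1 p.2) (fun p : ℝ × ℝ => pd1 φU p.1 p.2) (fun p : ℝ × ℝ => pd2 U p.1 p.2) (fun p : ℝ × ℝ => pd2 φU p.1 p.2) (fun p : ℝ × ℝ => pd1 V p.1 p.2) (fun p : ℝ × ℝ => pd1 φV p.1 p.2) (fun p : ℝ × ℝ => pd2 V p.1 p.2) (fun p : ℝ × ℝ => pd2 φV p.1 p.2) (fun p : ℝ × ℝ => pd1 W p.1 p.2) (fun p : ℝ × ℝ => pd1 φW p.1 p.2) (fun p : ℝ × ℝ => pd2 W p.1 p.2) (fun p : ℝ × ℝ => pd2 φW p.1 p.2) (fun p : ℝ × ℝ => U p.1 p.2) (fun p : ℝ × ℝ => φU p.1 p.2) (fun p : ℝ × ℝ => W p.1 p.2) (fun p : ℝ ×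 ℝ => φW p.1 p.2) (fun _ : ℝ × ℝ => (0:ℝ))
      ((contDiff_pd2 (contDiff_pd1 hM)).continuous) ((contDiff_pd2 (contDiff_pd1 hφM)).continuous) ((contDiff_pd2 (contDiff_pd1 hU)).continuous) ((contDiff_pd2 (contDiff_pd1 hφU)).continuous) ((contDiff_pd1 hU).continuous) ((contDiff_pd1 hφU).continuous) ((contDiff_pd2 hU).continuous) ((contDiff_pd2 hφU).continuous) ((contDiff_pd1 hV).continuous) ((contDiff_pd1 hφV).continuous) ((contDiff_pd2 hV).continuous) ((contDiff_pd2 hφV).continuous) ((contDiff_pd1 hW).continuous) ((contDiff_pd1 hφW).continuous) ((contDiff_pd2 hW).continuous) ((contDiff_pd2 hφW).continuous) (hU.continuous) (hφU.continuous) (hW.continuous) (hφW.continuous) (continuous_const)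
  -- the compact set K
  set K : Set (ℝ × ℝ) := ((tsupport (fun q : ℝ × ℝ => φM q.1 q.2) ∪ tsupport (fun q : ℝ × ℝ => φU q.1 q.2)) ∪ tsupport (fun q : ℝ × ℝ => φV q.1 q.2)) ∪ tsupport (fun q : ℝ × ℝ => φW q.1 q.2) with hKdef
  have hKc : IsCompact K := IsCompact.union (IsCompact.union (IsCompact.union hφMs hφUs) hφVs) hφWs
  have hsubM : tsupport (fun q : ℝ × ℝ => φM q.1 q.2) ⊆ K := by
    rw [hKdef]; exact (Set.subset_union_left.trans Set.subset_union_left).trans Set.subset_union_left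
  have hsubU : tsupport (fun q : ℝ × ℝ => φU q.1 q.2) ⊆ K := by
    rw [hKdef]; exact (Set.subset_union_right.trans Set.subset_union_left).trans Set.subset_union_left
  have hsubV : tsupport (fun q : ℝ × ℝ => φV q.1 q.2) ⊆ K := by
    rw [hKdef]; exact Set.subset_union_right.trans Set.subset_union_left
  have hsubW : tsupport (fun q : ℝ × ℝ => φW q.1 q.2) ⊆ K := by
    rw [hKdef]; exact Set.subset_union_right
  have hnM : ∀ p : ℝ × ℝ, p ∉ K → p ∉ tsupport (fun q : ℝ × ℝ => φM q.1 q.2) :=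
    fun p hp h => hp (hsubM h)
  have hvalM : ∀ p : ℝ × ℝ, p ∉ K → φM p.1 p.2 = 0 :=
    fun p hp => image_eq_zero_of_notMem_tsupport (f := fun q : ℝ × ℝ => φM q.1 q.2) (hnM p hp)
  have hd1M : ∀ p : ℝ × ℝ, p ∉ K → pd1 φM p.1 p.2 = 0 :=
    fun p hp => pd1_zero_on (O := (tsupport (fun q : ℝ × ℝ => φM q.1 q.2))ᶜ) (isOpen_compl_iff.mpr (isClosed_tsupport _)) (fun q hq => image_eq_zero_of_notMem_tsupport (f := fun q : ℝ × ℝ => φM q.1 q.2) hq) p (hnM p hp)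
  have hd2M : ∀ p : ℝ × ℝ, p ∉ K → pd2 φM p.1 p.2 = 0 :=
    fun p hp => pd2_zero_on (O := (tsupport (fun q : ℝ × ℝ => φM q.1 q.2))ᶜ) (isOpen_compl_iff.mpr (isClosed_tsupport _)) (fun q hq => image_eq_zero_of_notMem_tsupport (f := fun q : ℝ × ℝ => φM q.1 q.2) hq) p (hnM p hp)
  have hd21M : ∀ p : ℝ × ℝ, p ∉ K → pd2 (pd1 φM) p.1 p.2 = 0 :=
    fun p hp => pd2_zero_on (O := (tsupport (fun q : ℝ × ℝ => φM q.1 q.2))ᶜ) (isOpen_compl_iff.mpr (isClosed_tsupport _))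
      (pd1_zero_on (O := (tsupport (fun q : ℝ × ℝ => φM q.1 q.2))ᶜ) (isOpen_compl_iff.mpr (isClosed_tsupport _)) (fun q hq => image_eq_zero_of_notMem_tsupport (f := fun q : ℝ × ℝ => φM q.1 q.2) hq)) p (hnM p hp)
  have hnU : ∀ p : ℝ × ℝ, p ∉ K → p ∉ tsupport (fun q : ℝ × ℝ => φU q.1 q.2) :=
    fun p hp h => hp (hsubU h)
  have hvalU : ∀ p : ℝ × ℝ, p ∉ K → φU p.1 p.2 = 0 :=
    fun p hp => image_eq_zero_of_notMem_tsupport (f := fun q : ℝ × ℝ => φU q.1 q.2) (hnU p hp)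
  have hd1U : ∀ p : ℝ × ℝ, p ∉ K → pd1 φU p.1 p.2 = 0 :=
    fun p hp => pd1_zero_on (O := (tsupport (fun q : ℝ × ℝ => φU q.1 q.2))ᶜ) (isOpen_compl_iff.mpr (isClosed_tsupport _)) (fun q hq => image_eq_zero_of_notMem_tsupport (f := fun q : ℝ × ℝ => φU q.1 q.2) hq) p (hnU p hp)
  have hd2U : ∀ p : ℝ × ℝ, p ∉ K → pd2 φU p.1 p.2 = 0 :=
    fun p hp => pd2_zero_on (O := (tsupport (fun q : ℝ × ℝ => φU q.1 q.2))ᶜ) (isOpen_compl_iff.mpr (isClosed_tsupport _)) (fun q hq => image_eq_zero_of_notMem_tsupport (f := fun q : ℝ × ℝ => φU q.1 q.2) hq) p (hnU p hp)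
  have hd21U : ∀ p : ℝ × ℝ, p ∉ K → pd2 (pd1 φU) p.1 p.2 = 0 :=
    fun p hp => pd2_zero_on (O := (tsupport (fun q : ℝ × ℝ => φU q.1 q.2))ᶜ) (isOpen_compl_iff.mpr (isClosed_tsupport _))
      (pd1_zero_on (O := (tsupport (fun q : ℝ × ℝ => φU q.1 q.2))ᶜ) (isOpen_compl_iff.mpr (isClosed_tsupport _)) (fun q hq => image_eq_zero_of_notMem_tsupport (f := fun q : ℝ × ℝ => φU q.1 q.2) hq)) p (hnU p hp)
  have hnV : ∀ p : ℝ × ℝ, p ∉ K → p ∉ tsupport (fun q : ℝ × ℝ => φV q.1 q.2) :=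
    fun p hp h => hp (hsubV h)
  have hvalV : ∀ p : ℝ × ℝ, p ∉ K → φV p.1 p.2 = 0 :=
    fun p hp => image_eq_zero_of_notMem_tsupport (f := fun q : ℝ × ℝ => φV q.1 q.2) (hnV p hp)
  have hd1V : ∀ p : ℝ × ℝ, p ∉ K → pd1 φV p.1 p.2 = 0 :=
    fun p hp => pd1_zero_on (O := (tsupport (fun q : ℝ × ℝ => φV q.1 q.2))ᶜ) (isOpen_compl_iff.mpr (isClosed_tsupport _)) (fun q hq => image_eq_zero_of_notMem_tsupport (f := fun q : ℝ × ℝ => φV q.1 q.2) hq) p (hnV p hp)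
  have hd2V : ∀ p : ℝ × ℝ, p ∉ K → pd2 φV p.1 p.2 = 0 :=
    fun p hp => pd2_zero_on (O := (tsupport (fun q : ℝ × ℝ => φV q.1 q.2))ᶜ) (isOpen_compl_iff.mpr (isClosed_tsupport _)) (fun q hq => image_eq_zero_of_notMem_tsupport (f := fun q : ℝ × ℝ => φV q.1 q.2) hq) p (hnV p hp)
  have hd21V : ∀ p : ℝ × ℝ, p ∉ K → pd2 (pd1 φV) p.1 p.2 = 0 :=
    fun p hp => pd2_zero_on (O := (tsupport (fun q : ℝ × ℝ => φV q.1 q.2))ᶜ) (isOpen_compl_iff.mpr (isClosed_tsupport _))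
      (pd1_zero_on (O := (tsupport (fun q : ℝ × ℝ => φV q.1 q.2))ᶜ) (isOpen_compl_iff.mpr (isClosed_tsupport _)) (fun q hq => image_eq_zero_of_notMem_tsupport (f := fun q : ℝ × ℝ => φV q.1 q.2) hq)) p (hnV p hp)
  have hnW : ∀ p : ℝ × ℝ, p ∉ K → p ∉ tsupport (fun q : ℝ × ℝ => φW q.1 q.2) :=
    fun p hp h => hp (hsubW h)
  have hvalW : ∀ p : ℝ × ℝ, p ∉ K → φW p.1 p.2 = 0 :=
    fun p hp => image_eq_zero_of_notMem_tsupport (f := fun q : ℝ × ℝ => φW q.1 q.2) (hnW p hp)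
  have hd1W : ∀ p : ℝ × ℝ, p ∉ K → pd1 φW p.1 p.2 = 0 :=
    fun p hp => pd1_zero_on (O := (tsupport (fun q : ℝ × ℝ => φW q.1 q.2))ᶜ) (isOpen_compl_iff.mpr (isClosed_tsupport _)) (fun q hq => image_eq_zero_of_notMem_tsupport (f := fun q : ℝ × ℝ => φW q.1 q.2) hq) p (hnW p hp)
  have hd2W : ∀ p : ℝ × ℝ, p ∉ K → pd2 φW p.1 p.2 = 0 :=
    fun p hp => pd2_zero_on (O := (tsupport (fun q : ℝ × ℝ => φW q.1 q.2))ᶜ) (isOpen_compl_iff.mpr (isClosed_tsupport _)) (fun q hq => image_eq_zero_of_notMem_tsupport (f := fun q : ℝ × ℝ => φW q.1 q.2) hq) p (hnW p hp)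
  have hd21W : ∀ p : ℝ × ℝ, p ∉ K → pd2 (pd1 φW) p.1 p.2 = 0 :=
    fun p hp => pd2_zero_on (O := (tsupport (fun q : ℝ × ℝ => φW q.1 q.2))ᶜ) (isOpen_compl_iff.mpr (isClosed_tsupport _))
      (pd1_zero_on (O := (tsupport (fun q : ℝ × ℝ => φW q.1 q.2))ᶜ) (isOpen_compl_iff.mpr (isClosed_tsupport _)) (fun q hq => image_eq_zero_of_notMem_tsupport (f := fun q : ℝ × ℝ => φW q.1 q.2) hq)) p (hnW p hp)
  -- G vanishes off K
  have hGzero : ∀ (s : ℝ) (p : ℝ × ℝ), p ∉ K → ((-2 * pd2 (pd1 φM) p.1 p.2 - 4 * pd2 (pd1 φU) p.1 p.2 + 3 * (pd1 φU p.1 p.2 * (pd2 U p.1 p.2 + s * pd2 φU p.1 p.2) + (pd1 U p.1 p.2 + s * pd1 φU p.1 p.2) * pd2 φU p.1 p.2) + ((pd1 φV p.1 p.2 * (pd2 V p.1 p.2 + s * pd2 φV p.1 p.2) + (pd1 V p.1 p.2 + s * pd1 φV p.1 p.2) * pd2 φV p.1 p.2) * (Real.cosh (W p.1 p.2 + s *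 φW p.1 p.2))^2 + (pd1 V p.1 p.2 + s * pd1 φV p.1 p.2) * (pd2 V p.1 p.2 + s * pd2 φV p.1 p.2) * (2 * Real.cosh (W p.1 p.2 + s * φW p.1 p.2) * Real.sinh (W p.1 p.2 + s * φW p.1 p.2) * φW p.1 p.2)) + (pd1 φW p.1 p.2 * (pd2 W p.1 p.2 + s * pd2 φW p.1 p.2) + (pd1 W p.1 p.2 + s * pd1 φW p.1 p.2) * pd2 φW p.1 p.2)) * Real.exp (-(U p.1 p.2 + s * φU p.1 p.2))) + (-2 * (pd2 (pd1 M) p.1 p.2 + s * pd2 (pd1 φM) p.1 p.2) - 4 * (pd2 (pd1 U) p.1 p.2 + s * pd2 (pd1 φU) p.1 p.2) + 3 * (pd1 U p.1 p.2 + s * pd1 φU p.1 p.2) * (pd2 U p.1 p.2 + s * pd2 φU p.1 p.2) + (pd1 V p.1 p.2 + s * pd1 φV p.1 p.2) * (pd2 V p.1 p.2 + s * pd2 φV p.1 p.2) * (Real.cosh (W p.1 p.2 + s * φW p.1 p.2))^2 + (pd1 W p.1 p.2 + s * pd1 φW p.1 p.2) * (pd2 W p.1 p.2 + s * pd2 φW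 p.1 p.2)) * (Real.exp (-(U p.1 p.2 + s * φU p.1 p.2)) * (-φU p.1 p.2)) = 0 := by
    intro s p hp
    rw [hd21M p hp, hd21U p hp, hd1U p hp, hd2U p hp, hd1V p hp, hd2V p hp, hd1W p hp,
      hd2W p hp, hvalU p hp, hvalW p hp]
    ring
  -- the bound
  obtain ⟨C, hC⟩ := IsCompact.exists_bound_of_continuousOn
    ((isCompact_Icc (a := (-1:ℝ)) (b := (1:ℝ))).prod hKc) hGc.continuousOn
  have hbound_int : Integrable (K.indicator (fun _ => max C 0)) (volume : Measure (ℝ × ℝ)) :=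
    (MeasureTheory.integrableOn_const hKc.measure_lt_top.ne).integrable_indicator
      hKc.isClosed.measurableSet
  have h_bound : ∀ᵐ (p : ℝ × ℝ) ∂(volume : Measure (ℝ × ℝ)), ∀ s ∈ Metric.ball (0:ℝ) 1,
      ‖((-2 * pd2 (pd1 φM) p.1 p.2 - 4 * pd2 (pd1 φU) p.1 p.2 + 3 * (pd1 φU p.1 p.2 * (pd2 U p.1 p.2 + s * pd2 φU p.1 p.2) + (pd1 U p.1 p.2 + s * pd1 φU p.1 p.2) * pd2 φU p.1 p.2) + ((pd1 φV p.1 p.2 * (pd2 V p.1 p.2 + s * pd2 φV p.1 p.2) + (pd1 V p.1 p.2 + s * pd1 φV p.1 p.2) * pd2 φV p.1 p.2) * (Real.cosh (W p.1 p.2 + s * φW p.1 p.2))^2 + (pd1 V p.1 p.2 + s * pd1 φV p.1 p.2) * (pd2 V p.1 p.2 + s * pd2 φV p.1 p.2) * (2 * Real.cosh (W p.1 p.2 + s * φW p.1 p.2) * Real.sinh (W p.1 p.2 + s * φW p.1 p.2) * φW p.1 p.2)) + (pd1 φW p.1 p.2 * (pd2 W p.1 p.2 + s * pd2 φW p.1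 p.2) + (pd1 W p.1 p.2 + s * pd1 φW p.1 p.2) * pd2 φW p.1 p.2)) * Real.exp (-(U p.1 p.2 + s * φU p.1 p.2))) + (-2 * (pd2 (pd1 M) p.1 p.2 + s * pd2 (pd1 φM) p.1 p.2) - 4 * (pd2 (pd1 U) p.1 p.2 + s * pd2 (pd1 φU) p.1 p.2) + 3 * (pd1 U p.1 p.2 + s * pd1 φU p.1 p.2) * (pd2 U p.1 p.2 + s * pd2 φU p.1 p.2) + (pd1 V p.1 p.2 + s * pd1 φV p.1 p.2) * (pd2 V p.1 p.2 + s * pd2 φV p.1 p.2) * (Real.cosh (W p.1 p.2 + s * φW p.1 p.2))^2 + (pd1 W p.1 p.2 + s * pd1 φW p.1 p.2) * (pd2 W p.1 p.2 + s * pd2 φW p.1 p.2)) * (Real.exp (-(U p.1 p.2 + s * φU p.1 p.2)) * (-φU p.1 p.2))‖ ≤ K.indicator (fun _ => max C 0) p := by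
    refine MeasureTheory.ae_of_all _ (fun p s hs => ?_)
    by_cases hp : p ∈ K
    · have h1 : |s| < 1 := by simpa [Real.dist_eq] using hs
      obtain ⟨hl, hr⟩ := abs_lt.mp h1
      have hsI : s ∈ Set.Icc (-1:ℝ) 1 := ⟨le_of_lt hl, le_of_lt hr⟩
      have h2 := hC (s, p) (Set.mem_prod.mpr ⟨hsI, hp⟩)
      rw [Set.indicator_of_mem hp]
      exact le_trans h2 (le_max_left _ _)
    · rw [Set.indicator_of_notMem hp, hGzero s p hp]
      simp
  -- the integrand vanishes identically at s = 0
  have hB0 : ∀ p : ℝ × ℝ, (-2 * (pd2 (pd1 M) p.1 p.2 + 0 * pd2 (pd1 φM) p.1 p.2) - 4 * (pd2 (pd1 U) p.1 p.2 + 0 * pd2 (pd1 φU) p.1 p.2) + 3 * (pd1 U p.1 p.2 + 0 * pd1 φU p.1 p.2) * (pd2 U p.1 p.2 + 0 * pd2 φU p.1 p.2) + (pd1 V p.1 p.2 + 0 * pd1 φV p.1 p.2) * (pd2 V p.1 p.2 + 0 * pd2 φV p.1 p.2) * (Real.cosh (W p.1 p.2 + 0 * φW p.1 p.2))^2 + (pd1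 W p.1 p.2 + 0 * pd1 φW p.1 p.2) * (pd2 W p.1 p.2 + 0 * pd2 φW p.1 p.2)) = 0 := by
    intro p
    rw [e4 p.1 p.2, e1 p.1 p.2]
    ring
  have hF0 : (fun p : ℝ × ℝ => Ldens (fun θ v => M θ v + 0 * φM θ v) (fun θ v => U θ v + 0 * φU θ v) (fun θ v => V θ v + 0 * φV θ v) (fun θ v => W θ v + 0 * φW θ v) p.1 p.2) = (fun _ => (0:ℝ)) := by
    funext p
    rw [hFeq 0 p, hB0 p, zero_mul]
  -- differentiate under the integral sign
  have main := hasDerivAt_integral_of_dominated_loc_of_deriv_le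
    (μ := (volume : Measure (ℝ × ℝ))) (x₀ := (0:ℝ)) (s := Metric.ball (0:ℝ) 1)
    (F := fun (s : ℝ) (p : ℝ × ℝ) => Ldens (fun θ v => M θ v + s * φM θ v) (fun θ v => U θ v + s * φU θ v) (fun θ v => V θ v + s * φV θ v) (fun θ v => W θ v + s * φW θ v) p.1 p.2)
    (F' := fun (s : ℝ) (p : ℝ × ℝ) => ((-2 * pd2 (pd1 φM) p.1 p.2 - 4 * pd2 (pd1 φU) p.1 p.2 + 3 * (pd1 φU p.1 p.2 * (pd2 U p.1 p.2 + s * pd2 φU p.1 p.2) + (pd1 U p.1 p.2 + s * pd1 φU p.1 p.2) * pd2 φU p.1 p.2) + ((pd1 φV p.1 p.2 * (pd2 V p.1 p.2 + s * pd2 φV p.1 p.2) + (pd1 V p.1 p.2 + s * pd1 φV p.1 p.2) * pd2 φV p.1 p.2) * (Real.cosh (W p.1 p.2 + s * φW p.1 p.2))^2 + (pd1 V p.1 p.2 + s * pd1 φV p.1 p.2) * (pd2 V p.1 p.2 + s * pd2 φV p.1 p.2) * (2 * Real.cosh (W p.1 p.2 + s * φW p.1 p.2) * Real.sinh (W p.1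 p.2 + s * φW p.1 p.2) * φW p.1 p.2)) + (pd1 φW p.1 p.2 * (pd2 W p.1 p.2 + s * pd2 φW p.1 p.2) + (pd1 W p.1 p.2 + s * pd1 φW p.1 p.2) * pd2 φW p.1 p.2)) * Real.exp (-(U p.1 p.2 + s * φU p.1 p.2))) + (-2 * (pd2 (pd1 M) p.1 p.2 + s * pd2 (pd1 φM) p.1 p.2) - 4 * (pd2 (pd1 U) p.1 p.2 + s * pd2 (pd1 φU) p.1 p.2) + 3 * (pd1 U p.1 p.2 + s * pd1 φU p.1 p.2) * (pd2 U p.1 p.2 + s * pd2 φU p.1 p.2) + (pd1 V p.1 p.2 + s * pd1 φV p.1 p.2) * (pd2 V p.1 p.2 + s * pd2 φV p.1 p.2) * (Real.cosh (W p.1 p.2 + s * φW p.1 p.2))^2 + (pd1 W p.1 p.2 + s * pd1 φW p.1 p.2) * (pd2 W p.1 p.2 + s * pd2 φW p.1 p.2)) * (Real.exp (-(U p.1 p.2 + s * φU p.1 p.2)) * (-φU p.1 p.2)))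
    (bound := K.indicator (fun _ => max C 0))
    (Metric.ball_mem_nhds (0:ℝ) one_pos)
    (Filter.Eventually.of_forall fun s => (hcontF s).aestronglyMeasurable)
    (show Integrable (fun p : ℝ × ℝ => Ldens (fun θ v => M θ v + 0 * φM θ v) (fun θ v => U θ v + 0 * φU θ v) (fun θ v => V θ v + 0 * φV θ v) (fun θ v => W θ v + 0 * φW θ v) p.1 p.2) volume by
      rw [hF0]; exact integrable_zero _ _ _)
    hG0c.aestronglyMeasurable
    h_bound
    hbound_int
    (MeasureTheory.ae_of_all _ fun p s _ => hder p s)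
  -- identify the derivative as a divergence and integrate it away
  have hPsm : ContDiff ℝ (⊤:ℕ∞) (fun p : ℝ × ℝ => (fun θ v => (-2 * pd2 φM θ v - 4 * pd2 φU θ v + 3 * φU θ v * pd2 U θ v + φV θ v * pd2 V θ v * (Real.cosh (W θ v))^2 + φW θ v * pd2 W θ v) * Real.exp (-(U θ v))) p.1 p.2) := ((((((contDiff_const.mul (contDiff_pd2 hφM)).sub (contDiff_const.mul (contDiff_pd2 hφU))).add ((contDiff_const.mul hφU).mul (contDiff_pd2 hU))).add ((hφV.mul (contDiff_pd2 hV)).mul ((hW.cosh).pow 2))).add (hφW.mul (contDiff_pd2 hW))).mul (Real.contDiff_exp.comp hU.neg))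
  have hQsm : ContDiff ℝ (⊤:ℕ∞) (fun p : ℝ × ℝ => (fun θ v => (-2 * φM θ v * pd1 U θ v - φU θ v * pd1 U θ v + φV θ v * pd1 V θ v * (Real.cosh (W θ v))^2 + φW θ v * pd1 W θ v) * Real.exp (-(U θ v))) p.1 p.2) := ((((((contDiff_const.mul hφM).mul (contDiff_pd1 hU)).sub (hφU.mul (contDiff_pd1 hU))).add ((hφV.mul (contDiff_pd1 hV)).mul ((hW.cosh).pow 2))).add (hφW.mul (contDiff_pd1 hW))).mul (Real.contDiff_exp.comp hU.neg))
  have hPcs : HasCompactSupport (fun p : ℝ × ℝ => (fun θ v => (-2 * pd2 φM θ v - 4 * pd2 φU θ v + 3 * φU θ v * pd2 U θ v + φV θ v * pd2 V θ v * (Real.cosh (W θ v))^2 + φW θ v * pd2 W θ v) * Real.exp (-(U θ v))) p.1 p.2) := by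
    apply HasCompactSupport.intro hKc
    intro p hp
    show (-2 * pd2 φM p.1 p.2 - 4 * pd2 φU p.1 p.2 + 3 * φU p.1 p.2 * pd2 U p.1 p.2
      + φV p.1 p.2 * pd2 V p.1 p.2 * (Real.cosh (W p.1 p.2))^2
      + φW p.1 p.2 * pd2 W p.1 p.2) * Real.exp (-(U p.1 p.2)) = 0
    rw [hd2M p hp, hd2U p hp, hvalU p hp, hvalV p hp, hvalW p hp]
    ring
  have hQcs : HasCompactSupport (fun p : ℝ × ℝ => (fun θ v => (-2 * φM θ v * pd1 U θ v - φU θ v * pd1 U θ v + φV θ v * pd1 V θ v * (Real.cosh (W θ v))^2 + φW θ v * pd1 W θ v) * Real.exp (-(U θ v))) p.1 p.2) := by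
    apply HasCompactSupport.intro hKc
    intro p hp
    show (-2 * φM p.1 p.2 * pd1 U p.1 p.2 - φU p.1 p.2 * pd1 U p.1 p.2
      + φV p.1 p.2 * pd1 V p.1 p.2 * (Real.cosh (W p.1 p.2))^2
      + φW p.1 p.2 * pd1 W p.1 p.2) * Real.exp (-(U p.1 p.2)) = 0
    rw [hvalM p hp, hvalU p hp, hvalV p hp, hvalW p hp]
    ring
  have hintP : Integrable (fun p : ℝ × ℝ => pd1 (fun θ v => (-2 * pd2 φM θ v - 4 * pd2 φU θ v + 3 * φU θ v * pd2 U θ v + φV θ v * pd2 V θ v * (Real.cosh (W θ v))^2 + φW θ v * pd2 W θ v) * Real.exp (-(U θ v))) p.1 p.2) (volume : Measure (ℝ × ℝ)) :=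
    (contDiff_pd1 hPsm).continuous.integrable_of_hasCompactSupport (pd1_hcs hPsm hPcs)
  have hintQ : Integrable (fun p : ℝ × ℝ => pd2 (fun θ v => (-2 * φM θ v * pd1 U θ v - φU θ v * pd1 U θ v + φV θ v * pd1 V θ v * (Real.cosh (W θ v))^2 + φW θ v * pd1 W θ v) * Real.exp (-(U θ v))) p.1 p.2) (volume : Measure (ℝ × ℝ)) :=
    (contDiff_pd2 hQsm).continuous.integrable_of_hasCompactSupport (pd2_hcs hQsm hQcs)
  have hptwise : ∀ p : ℝ × ℝ,
      ((-2 * pd2 (pd1 φM) p.1 p.2 - 4 * pd2 (pd1 φU) p.1 p.2 + 3 * (pd1 φU p.1 p.2 * (pd2 U p.1 p.2 + 0 * pd2 φU p.1 p.2) + (pd1 U p.1 p.2 + 0 * pd1 φU p.1 p.2) * pd2 φU p.1 p.2) + ((pd1 φV p.1 p.2 * (pd2 V p.1 p.2 + 0 * pd2 φV p.1 p.2) + (pd1 V p.1 p.2 + 0 * pd1 φV p.1 p.2) * pd2 φV p.1 p.2) * (Real.cosh (W p.1 p.2 + 0 * φW p.1 p.2))^2 + (pd1 V p.1 p.2 +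 0 * pd1 φV p.1 p.2) * (pd2 V p.1 p.2 + 0 * pd2 φV p.1 p.2) * (2 * Real.cosh (W p.1 p.2 + 0 * φW p.1 p.2) * Real.sinh (W p.1 p.2 + 0 * φW p.1 p.2) * φW p.1 p.2)) + (pd1 φW p.1 p.2 * (pd2 W p.1 p.2 + 0 * pd2 φW p.1 p.2) + (pd1 W p.1 p.2 + 0 * pd1 φW p.1 p.2) * pd2 φW p.1 p.2)) * Real.exp (-(U p.1 p.2 + 0 * φU p.1 p.2))) + (-2 * (pd2 (pd1 M) p.1 p.2 + 0 * pd2 (pd1 φM) p.1 p.2) - 4 * (pd2 (pd1 U) p.1 p.2 + 0 * pd2 (pd1 φU) p.1 p.2) + 3 * (pd1 U p.1 p.2 + 0 * pd1 φU p.1 p.2) * (pd2 U p.1 p.2 + 0 * pd2 φU p.1 p.2) + (pd1 V p.1 p.2 + 0 * pd1 φV p.1 p.2) * (pd2 V p.1 p.2 + 0 * pd2 φV p.1 p.2) * (Real.cosh (W p.1 p.2 + 0 * φW p.1 p.2))^2 + (pd1 W p.1 p.2 + 0 * pd1 φW p.1 p.2) * (pd2 W p.1 p.2 + 0 * pd2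 φW p.1 p.2)) * (Real.exp (-(U p.1 p.2 + 0 * φU p.1 p.2)) * (-φU p.1 p.2)) = pd1 (fun θ v => (-2 * pd2 φM θ v - 4 * pd2 φU θ v + 3 * φU θ v * pd2 U θ v + φV θ v * pd2 V θ v * (Real.cosh (W θ v))^2 + φW θ v * pd2 W θ v) * Real.exp (-(U θ v))) p.1 p.2 + pd2 (fun θ v => (-2 * φM θ v * pd1 U θ v - φU θ v * pd1 U θ v + φV θ v * pd1 V θ v * (Real.cosh (W θ v))^2 + φW θ v * pd1 W θ v) * Real.exp (-(U θ v))) p.1 p.2 := by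
    intro p
    have hP : pd1 (fun θ v => (-2 * pd2 φM θ v - 4 * pd2 φU θ v + 3 * φU θ v * pd2 U θ v + φV θ v * pd2 V θ v * (Real.cosh (W θ v))^2 + φW θ v * pd2 W θ v) * Real.exp (-(U θ v))) p.1 p.2 = _ := (((((((hasDerivAt_pd1 (contDiff_pd2 hφM) p.1 p.2).const_mul (-2)).sub ((hasDerivAt_pd1 (contDiff_pd2 hφU) p.1 p.2).const_mul 4)).add (((hasDerivAt_pd1 hφU p.1 p.2).const_mul 3).mul (hasDerivAt_pd1 (contDiff_pd2 hU) p.1 p.2))).add (((hasDerivAt_pd1 hφV p.1 p.2).mul (hasDerivAt_pd1 (contDiff_pd2 hV) p.1 p.2)).mul (((hasDerivAt_pd1 hW p.1 p.2).cosh).pow 2))).add ((hasDerivAt_pd1 hφW p.1 p.2).mul (hasDerivAt_pd1 (contDiff_pd2 hW) p.1 p.2))).mul (((hasDerivAt_pd1 hU p.1 p.2).neg).exp)).deriv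
    have hQ : pd2 (fun θ v => (-2 * φM θ v * pd1 U θ v - φU θ v * pd1 U θ v + φV θ v * pd1 V θ v * (Real.cosh (W θ v))^2 + φW θ v * pd1 W θ v) * Real.exp (-(U θ v))) p.1 p.2 = _ := (((((((hasDerivAt_pd2 hφM p.1 p.2).const_mul (-2)).mul (hasDerivAt_pd2 (contDiff_pd1 hU) p.1 p.2)).sub ((hasDerivAt_pd2 hφU p.1 p.2).mul (hasDerivAt_pd2 (contDiff_pd1 hU) p.1 p.2))).add (((hasDerivAt_pd2 hφV p.1 p.2).mul (hasDerivAt_pd2 (contDiff_pd1 hV) p.1 p.2)).mul (((hasDerivAt_pd2 hW p.1 p.2).cosh).pow 2))).add ((hasDerivAt_pd2 hφW p.1 p.2).mul (hasDerivAt_pd2 (contDiff_pd1 hW) p.1 p.2))).mul (((hasDerivAt_pd2 hU p.1 p.2).neg).exp)).deriv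
    rw [hP, hQ, pd_symm hφM p.1 p.2, pd_symm hφU p.1 p.2, pd_symm hU p.1 p.2,
      pd_symm hV p.1 p.2, pd_symm hW p.1 p.2, e1 p.1 p.2, e2 p.1 p.2, e3 p.1 p.2, e4 p.1 p.2,
      Real.tanh_eq_sinh_div_cosh]
    simp only [Pi.add_apply, Pi.sub_apply, Pi.mul_apply, Pi.neg_apply, Pi.pow_apply]
    have hc : Real.cosh (W p.1 p.2) ≠ 0 := (Real.cosh_pos (W p.1 p.2)).ne'
    field_simp
    ring
  have hzint : (∫ p : ℝ × ℝ, ((-2 * pd2 (pd1 φM) p.1 p.2 - 4 * pd2 (pd1 φU) p.1 p.2 + 3 * (pd1 φU p.1 p.2 * (pd2 U p.1 p.2 + 0 * pd2 φU p.1 p.2) + (pd1 U p.1 p.2 + 0 * pd1 φU p.1 p.2) * pd2 φU p.1 p.2) + ((pd1 φV p.1 p.2 * (pd2 V p.1 p.2 + 0 * pd2 φV p.1 p.2) + (pd1 V p.1 p.2 + 0 * pd1 φV p.1 p.2) * pd2 φV p.1 p.2) * (Real.cosh (W p.1 p.2 + 0 * φW p.1 p.2))^2 + (pd1 V p.1 p.2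 + 0 * pd1 φV p.1 p.2) * (pd2 V p.1 p.2 + 0 * pd2 φV p.1 p.2) * (2 * Real.cosh (W p.1 p.2 + 0 * φW p.1 p.2) * Real.sinh (W p.1 p.2 + 0 * φW p.1 p.2) * φW p.1 p.2)) + (pd1 φW p.1 p.2 * (pd2 W p.1 p.2 + 0 * pd2 φW p.1 p.2) + (pd1 W p.1 p.2 + 0 * pd1 φW p.1 p.2) * pd2 φW p.1 p.2)) * Real.exp (-(U p.1 p.2 + 0 * φU p.1 p.2))) + (-2 * (pd2 (pd1 M) p.1 p.2 + 0 * pd2 (pd1 φM) p.1 p.2) - 4 * (pd2 (pd1 U) p.1 p.2 + 0 * pd2 (pd1 φU) p.1 p.2) + 3 * (pd1 U p.1 p.2 + 0 * pd1 φU p.1 p.2) * (pd2 U p.1 p.2 + 0 * pd2 φU p.1 p.2) + (pd1 V p.1 p.2 + 0 * pd1 φV p.1 p.2) * (pd2 V p.1 p.2 + 0 * pd2 φV p.1 p.2) * (Real.cosh (W p.1 p.2 + 0 * φW p.1 p.2))^2 + (pd1 W p.1 p.2 + 0 * pd1 φW p.1 p.2) * (pd2 W p.1 p.2 + 0 * pd2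 φW p.1 p.2)) * (Real.exp (-(U p.1 p.2 + 0 * φU p.1 p.2)) * (-φU p.1 p.2))) = 0 := by
    rw [show (fun p : ℝ × ℝ => ((-2 * pd2 (pd1 φM) p.1 p.2 - 4 * pd2 (pd1 φU) p.1 p.2 + 3 * (pd1 φU p.1 p.2 * (pd2 U p.1 p.2 + 0 * pd2 φU p.1 p.2) + (pd1 U p.1 p.2 + 0 * pd1 φU p.1 p.2) * pd2 φU p.1 p.2) + ((pd1 φV p.1 p.2 * (pd2 V p.1 p.2 + 0 * pd2 φV p.1 p.2) + (pd1 V p.1 p.2 + 0 * pd1 φV p.1 p.2) * pd2 φV p.1 p.2) * (Real.cosh (W p.1 p.2 + 0 * φW p.1 p.2))^2 + (pd1 V p.1 p.2 + 0 * pd1 φV p.1 p.2) * (pd2 V p.1 p.2 + 0 * pd2 φV p.1 p.2) * (2 * Real.cosh (W p.1 p.2 + 0 * φW p.1 p.2) * Real.sinh (W p.1 p.2 + 0 * φW p.1 p.2) * φW p.1 p.2)) + (pd1 φW p.1 p.2 * (pd2 W p.1 p.2 + 0 * pd2 φW p.1 p.2) + (pd1 W p.1 p.2 + 0 * pd1 φW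 p.1 p.2) * pd2 φW p.1 p.2)) * Real.exp (-(U p.1 p.2 + 0 * φU p.1 p.2))) + (-2 * (pd2 (pd1 M) p.1 p.2 + 0 * pd2 (pd1 φM) p.1 p.2) - 4 * (pd2 (pd1 U) p.1 p.2 + 0 * pd2 (pd1 φU) p.1 p.2) + 3 * (pd1 U p.1 p.2 + 0 * pd1 φU p.1 p.2) * (pd2 U p.1 p.2 + 0 * pd2 φU p.1 p.2) + (pd1 V p.1 p.2 + 0 * pd1 φV p.1 p.2) * (pd2 V p.1 p.2 + 0 * pd2 φV p.1 p.2) * (Real.cosh (W p.1 p.2 + 0 * φW p.1 p.2))^2 + (pd1 W p.1 p.2 + 0 * pd1 φW p.1 p.2) * (pd2 W p.1 p.2 + 0 * pd2 φW p.1 p.2)) * (Real.exp (-(U p.1 p.2 + 0 * φU p.1 p.2)) * (-φU p.1 p.2)))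
        = (fun p : ℝ × ℝ => pd1 (fun θ v => (-2 * pd2 φM θ v - 4 * pd2 φU θ v + 3 * φU θ v * pd2 U θ v + φV θ v * pd2 V θ v * (Real.cosh (W θ v))^2 + φW θ v * pd2 W θ v) * Real.exp (-(U θ v))) p.1 p.2 + pd2 (fun θ v => (-2 * φM θ v * pd1 U θ v - φU θ v * pd1 U θ v + φV θ v * pd1 V θ v * (Real.cosh (W θ v))^2 + φW θ v * pd1 W θ v) * Real.exp (-(U θ v))) p.1 p.2) from funext hptwise]
    rw [MeasureTheory.integral_add hintP hintQ, integral_pd1_zero hPsm hPcs,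
      integral_pd2_zero hQsm hQcs, add_zero]
  have h2 : HasDerivAt (fun s : ℝ => ∫ p : ℝ × ℝ, Ldens (fun θ v => M θ v + s * φM θ v) (fun θ v => U θ v + s * φU θ v) (fun θ v => V θ v + s * φV θ v) (fun θ v => W θ v + s * φW θ v) p.1 p.2)
      (∫ p : ℝ × ℝ, ((-2 * pd2 (pd1 φM) p.1 p.2 - 4 * pd2 (pd1 φU) p.1 p.2 + 3 * (pd1 φU p.1 p.2 * (pd2 U p.1 p.2 + 0 * pd2 φU p.1 p.2) + (pd1 U p.1 p.2 + 0 * pd1 φU p.1 p.2) * pd2 φU p.1 p.2) + ((pd1 φV p.1 p.2 * (pd2 V p.1 p.2 + 0 * pd2 φV p.1 p.2) + (pd1 V p.1 p.2 + 0 * pd1 φV p.1 p.2) * pd2 φV p.1 p.2) * (Real.cosh (W p.1 p.2 + 0 * φW p.1 p.2))^2 + (pd1 V p.1 p.2 + 0 * pd1 φV p.1 p.2) * (pd2 V p.1 p.2 + 0 * pd2 φV p.1 p.2) * (2 * Real.cosh (W p.1 p.2 + 0 * φW p.1 p.2) * Real.sinh (W p.1 p.2 + 0 * φW p.1 p.2)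 * φW p.1 p.2)) + (pd1 φW p.1 p.2 * (pd2 W p.1 p.2 + 0 * pd2 φW p.1 p.2) + (pd1 W p.1 p.2 + 0 * pd1 φW p.1 p.2) * pd2 φW p.1 p.2)) * Real.exp (-(U p.1 p.2 + 0 * φU p.1 p.2))) + (-2 * (pd2 (pd1 M) p.1 p.2 + 0 * pd2 (pd1 φM) p.1 p.2) - 4 * (pd2 (pd1 U) p.1 p.2 + 0 * pd2 (pd1 φU) p.1 p.2) + 3 * (pd1 U p.1 p.2 + 0 * pd1 φU p.1 p.2) * (pd2 U p.1 p.2 + 0 * pd2 φU p.1 p.2) + (pd1 V p.1 p.2 + 0 * pd1 φV p.1 p.2) * (pd2 V p.1 p.2 + 0 * pd2 φV p.1 p.2) * (Real.cosh (W p.1 p.2 + 0 * φW p.1 p.2))^2 + (pd1 W p.1 p.2 + 0 * pd1 φW p.1 p.2) * (pd2 W p.1 p.2 + 0 * pd2 φW p.1 p.2)) * (Real.exp (-(U p.1 p.2 + 0 * φU p.1 p.2)) * (-φU p.1 p.2))) 0 := main.2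
  rw [hzint] at h2
  exact h2
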